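/- Theorem 3.1 (characterization of eigenvalues). Let λ ∈ ℂ. The following are equivalent: (i) there exists a function f : [0,2π] → ℂ, not identically zero, which is absolutely continuous with derivative f′, satisfies the boundary condition f(0) = ρ f(2π), and satisfies i f′(x) + V(x) f(x) + f(2π) k(x) = λ f(x) for almost every x ∈ (0,2π); (ii) the eigenvalue equation e^{i ∫₀^{2π} (V(t) − λ) dt} · ( i ∫₀^{2π} e^{−i ∫₀^{t} (V(s) − λ) ds} k(t) dt + ρ ) = 1 holds. -/

import Mathlib

open MeasureTheory Real Complex

/-- `f : [0,2π] → ℂ` is absolutely continuous with derivative `f'`: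
`f' ∈ L¹(0,2π)` and `f x = f 0 + ∫₀ˣ f'` for all `x ∈ [0,2π]`. -/
def IsACWithDeriv (f f' : ℝ → ℂ) : Prop :=
  MeasureTheory.IntegrableOn f' (Set.Ioc 0 (2 * Real.pi)) ∧
    ∀ x ∈ Set.Icc (0:ℝ) (2 * Real.pi), f x = f 0 + ∫ t in (0:ℝ)..x, f' t


section EigenAuxSection
open Set

namespace EigenAux

/-- The primitive of `a`. -/
noncomputable def Wf (a : ℝ → ℂ) (x : ℝ) : ℂ := ∫ t in (0:ℝ)..x, a t

variable {a : ℝ → ℂ} {M : ℝ}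

lemma integrableOn_of_bdd {g : ℝ → ℂ} {C : ℝ} {s : Set ℝ}
    (hg : AEStronglyMeasurable g (volume.restrict s))
    (hfin : volume s < ⊤)
    (hb : ∀ᵐ t ∂(volume.restrict s), ‖g t‖ ≤ C) : IntegrableOn g s := by
  have : IsFiniteMeasure (volume.restrict s) :=
    ⟨by rwa [Measure.restrict_apply_univ]⟩
  exact (integrable_const C).mono' hg hb

lemma M_nonneg (hb : ∀ t, ‖a t‖ ≤ M) : 0 ≤ M := le_trans (norm_nonneg (a 0)) (hb 0)

lemma a_intInt (hm : Measurable a) (hb : ∀ t, ‖a t‖ ≤ M) (u v : ℝ) :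
    IntervalIntegrable a volume u v := by
  constructor <;>
  exact integrableOn_of_bdd hm.aestronglyMeasurable.restrict measure_Ioc_lt_top
    (Filter.Eventually.of_forall fun t => hb t)

lemma Wf_cont (hm : Measurable a) (hb : ∀ t, ‖a t‖ ≤ M) : Continuous (Wf a) :=
  intervalIntegral.continuous_primitive (fun u v => a_intInt hm hb u v) 0

lemma Wf_eq_Ioc {x : ℝ} (hx : 0 ≤ x) : Wf a x = ∫ t in Ioc 0 x, a t :=
  intervalIntegral.integral_of_le hx

lemma Wf_norm_le (hb : ∀ t, ‖a t‖ ≤ M) {x : ℝ} (hx : 0 ≤ x) : ‖Wf a x‖ ≤ M * x := by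
  have := intervalIntegral.norm_integral_le_of_norm_le_const
    (f := a) (a := (0:ℝ)) (b := x) (C := M) (fun t _ => hb t)
  rwa [sub_zero, _root_.abs_of_nonneg hx] at this

lemma Wf_sub (hm : Measurable a) (hb : ∀ t, ‖a t‖ ≤ M) {s x : ℝ} (h0 : 0 ≤ s) (hsx : s ≤ x) :
    ∫ t in Ioc s x, a t = Wf a x - Wf a s := by
  have h1 : Wf a s + ∫ t in s..x, a t = Wf a x :=
    intervalIntegral.integral_add_adjacent_intervals (a_intInt hm hb 0 s) (a_intInt hm hb s x)
  rw [intervalIntegral.integral_of_le hsx] at h1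
  exact eq_sub_of_add_eq' h1

lemma fubini_triangle {g h : ℝ → ℂ} {x C : ℝ} (hx : 0 ≤ x)
    (hgm : Measurable g) (hhm : Measurable h)
    (hgi : IntegrableOn g (Ioc 0 x))
    (hC : ∀ t ∈ Ioc (0:ℝ) x, ‖h t‖ ≤ C) :
    ∫ t in Ioc 0 x, h t * ∫ s in Ioc 0 t, g s
      = ∫ s in Ioc 0 x, g s * ∫ t in Ioc s x, h t := by
  set μx := volume.restrict (Ioc (0:ℝ) x) with hμx
  set F : ℝ × ℝ → ℂ := fun p => if p.2 ≤ p.1 then h p.1 * g p.2 else 0 with hF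
  have hFmeas : Measurable F := by
    apply Measurable.ite (measurableSet_le measurable_snd measurable_fst)
    · exact (hhm.comp measurable_fst).mul (hgm.comp measurable_snd)
    · exact measurable_const
  have hdom : Integrable (fun p : ℝ × ℝ => C * ‖g p.2‖) (μx.prod μx) := by
    have h1 : Integrable (fun _ : ℝ => C) μx := by
      have : IsFiniteMeasure μx := ⟨by rw [Measure.restrict_apply_univ]; exact measure_Ioc_lt_top⟩
      exact integrable_const C
    exact h1.mul_prod hgi.norm
  have haeprod : ∀ᵐ p ∂(μx.prod μx), p ∈ (Ioc (0:ℝ) x) ×ˢ (Ioc (0:ℝ) x) := by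
    rw [hμx, Measure.prod_restrict]
    exact ae_restrict_mem (measurableSet_Ioc.prod measurableSet_Ioc)
  have hFint : Integrable F (μx.prod μx) := by
    refine hdom.mono' hFmeas.aestronglyMeasurable ?_
    filter_upwards [haeprod] with p hp
    rw [hF]
    by_cases hle : p.2 ≤ p.1
    · simp only [hle, if_pos, norm_mul]
      exact mul_le_mul_of_nonneg_right (hC _ hp.1) (norm_nonneg _)
    · simp only [hle, if_neg, not_false_iff, norm_zero]
      have hCnn : 0 ≤ C := le_trans (norm_nonneg _) (hC _ hp.1)
      positivity
  have hswap := MeasureTheory.integral_integral_swap (f := fun t s => F (t, s)) hFint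
  have hL : ∫ t in Ioc 0 x, h t * ∫ s in Ioc 0 t, g s = ∫ t, (∫ s, F (t, s) ∂μx) ∂μx := by
    refine setIntegral_congr_fun measurableSet_Ioc (fun t ht => ?_)
    have : ∫ s, F (t, s) ∂μx = ∫ s in Ioc 0 x, indicator (Iic t) (fun s => h t * g s) s := by
      refine setIntegral_congr_fun measurableSet_Ioc (fun s _ => ?_)
      rw [hF]; by_cases hst : s ≤ t
      · simp [hst, indicator]
      · simp [hst, indicator]
    rw [this, setIntegral_indicator measurableSet_Iic]
    have hset : Ioc (0:ℝ) x ∩ Iic t = Ioc 0 t := by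
      ext s; simp only [mem_inter_iff, mem_Ioc, mem_Iic]
      constructor
      · rintro ⟨⟨h1, _⟩, h3⟩; exact ⟨h1, h3⟩
      · rintro ⟨h1, h2⟩; exact ⟨⟨h1, le_trans h2 ht.2⟩, h2⟩
    rw [hset, MeasureTheory.integral_const_mul]
  have hR : ∫ s in Ioc 0 x, g s * ∫ t in Ioc s x, h t = ∫ s, (∫ t, F (t, s) ∂μx) ∂μx := by
    refine setIntegral_congr_fun measurableSet_Ioc (fun s hs => ?_)
    have : ∫ t, F (t, s) ∂μx = ∫ t in Ioc 0 x, indicator (Ici s) (fun t => h t * g s) t := by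
      refine setIntegral_congr_fun measurableSet_Ioc (fun t _ => ?_)
      rw [hF]; by_cases hst : s ≤ t
      · simp [hst, indicator]
      · simp [hst, indicator]
    rw [this, setIntegral_indicator measurableSet_Ici]
    have hset : Ioc (0:ℝ) x ∩ Ici s = Icc s x := by
      ext t; simp only [mem_inter_iff, mem_Ioc, mem_Ici, mem_Icc]
      constructor
      · rintro ⟨⟨_, h2⟩, h3⟩; exact ⟨h3, h2⟩
      · rintro ⟨h1, h2⟩; exact ⟨⟨lt_of_lt_of_le hs.1 h1, h2⟩, h1⟩
    rw [hset, ← integral_Icc_eq_integral_Ioc, MeasureTheory.integral_mul_const]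
    rw [mul_comm]
  rw [hL, hswap, ← hR]
-- pow rule
variable (hm : Measurable a) (hb : ∀ t, ‖a t‖ ≤ M)

lemma aW_int (hm : Measurable a) (hb : ∀ t, ‖a t‖ ≤ M) {x : ℝ} (hx : 0 ≤ x)
    (φ : ℂ → ℂ) (hφ : Continuous φ) :
    IntegrableOn (fun t => a t * φ (Wf a t)) (Ioc 0 x) := by
  obtain ⟨D, hD⟩ := (isCompact_Icc (a := (0:ℝ)) (b := x)).exists_bound_of_continuousOn
    ((hφ.comp (Wf_cont hm hb)).continuousOn (s := Icc 0 x))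
  refine integrableOn_of_bdd (C := M * D)
    ((hm.aestronglyMeasurable).mul ((hφ.comp (Wf_cont hm hb)).aestronglyMeasurable)).restrict
    measure_Ioc_lt_top ?_
  filter_upwards [ae_restrict_mem measurableSet_Ioc] with t ht
  have h1 : ‖φ (Wf a t)‖ ≤ D := hD t ⟨le_of_lt ht.1, ht.2⟩
  calc ‖a t * φ (Wf a t)‖ = ‖a t‖ * ‖φ (Wf a t)‖ := norm_mul _ _
    _ ≤ M * D := mul_le_mul (hb t) h1 (norm_nonneg _) (M_nonneg hb)

lemma pow_rule (hm : Measurable a) (hb : ∀ t, ‖a t‖ ≤ M) (n : ℕ) :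
    ∀ x : ℝ, 0 ≤ x →
      ∫ t in Ioc 0 x, a t * (Wf a t) ^ n = (Wf a x) ^ (n + 1) / (n + 1) := by
  induction n with
  | zero =>
    intro x hx
    simp [Wf_eq_Ioc hx]
  | succ n IH =>
    intro x hx
    have hWcont := Wf_cont hm hb
    have hint : ∀ y : ℝ, 0 ≤ y → IntegrableOn (fun t => a t * (Wf a t) ^ n) (Ioc 0 y) :=
      fun y hy => aW_int hm hb hy _ (continuous_pow n)
    have key : ∫ t in Ioc 0 x, a t * (Wf a t) ^ (n + 1)
        = ∫ s in Ioc 0 x, a s * ((Wf a x) ^ (n+1) / (n+1) - (Wf a s) ^ (n+1) / (n+1)) := by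
      have lhs_eq : ∫ t in Ioc 0 x, a t * (Wf a t) ^ (n + 1)
          = ∫ t in Ioc 0 x, (a t * (Wf a t) ^ n) * ∫ s in Ioc 0 t, a s := by
        refine setIntegral_congr_fun measurableSet_Ioc (fun t ht => ?_)
        rw [← Wf_eq_Ioc (le_of_lt ht.1), pow_succ]
        ring
      rw [lhs_eq]
      -- Fubini with h t = a t * (Wf a t)^n, g = a
      obtain ⟨D, hD⟩ := (isCompact_Icc (a := (0:ℝ)) (b := x)).exists_bound_of_continuousOn
        (((continuous_pow n).comp hWcont).continuousOn (s := Icc 0 x))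
      have hfub := fubini_triangle (g := a) (h := fun t => a t * (Wf a t) ^ n)
        (x := x) (C := M * D) hx hm
        (hm.mul ((hWcont.pow n).measurable))
        (integrableOn_of_bdd hm.aestronglyMeasurable.restrict measure_Ioc_lt_top
          (Filter.Eventually.of_forall fun t => hb t))
        (fun t ht => by
          calc ‖a t * (Wf a t) ^ n‖ = ‖a t‖ * ‖(Wf a t) ^ n‖ := norm_mul _ _
            _ ≤ M * D := mul_le_mul (hb t) (hD t ⟨le_of_lt ht.1, ht.2⟩) (norm_nonneg _)
                (M_nonneg hb))
      rw [hfub]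
      refine setIntegral_congr_fun measurableSet_Ioc (fun s hs => ?_)
      have hsplit : ∫ t in Ioc s x, a t * (Wf a t) ^ n
          = (Wf a x) ^ (n+1) / (n+1) - (Wf a s) ^ (n+1) / (n+1) := by
        have hdisj : Disjoint (Ioc (0:ℝ) s) (Ioc s x) := Ioc_disjoint_Ioc_of_le le_rfl
        have hunion : Ioc (0:ℝ) s ∪ Ioc s x = Ioc 0 x := Ioc_union_Ioc_eq_Ioc (le_of_lt hs.1) hs.2
        have hadd := setIntegral_union (f := fun t => a t * (Wf a t) ^ n) (μ := volume)
          hdisj measurableSet_Ioc (hint s (le_of_lt hs.1))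
          ((hint x hx).mono_set (Ioc_subset_Ioc (le_of_lt hs.1) le_rfl))
        rw [hunion, IH x hx, IH s (le_of_lt hs.1)] at hadd
        exact eq_sub_of_add_eq' hadd.symm
      rw [hsplit]
    have hsplit2 : ∫ s in Ioc 0 x, a s * ((Wf a x) ^ (n+1) / (n+1) - (Wf a s) ^ (n+1) / (n+1))
        = (Wf a x) ^ (n+1) / (n+1) * Wf a x
          - (1/((n:ℂ)+1)) * ∫ t in Ioc 0 x, a t * (Wf a t) ^ (n+1) := by
      have heq2 : ∀ s : ℝ, a s * ((Wf a x) ^ (n+1) / (n+1) - (Wf a s) ^ (n+1) / (n+1))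
          = (Wf a x) ^ (n+1) / (n+1) * a s - (1/((n:ℂ)+1)) * (a s * (Wf a s) ^ (n+1)) := by
        intro s; push_cast; ring
      simp_rw [heq2]
      rw [integral_sub (((integrableOn_of_bdd hm.aestronglyMeasurable.restrict
          measure_Ioc_lt_top (Filter.Eventually.of_forall fun t => hb t))).const_mul _)
        ((aW_int hm hb hx _ (continuous_pow (n+1))).const_mul _),
        MeasureTheory.integral_const_mul, MeasureTheory.integral_const_mul, ← Wf_eq_Ioc hx]
    have hEq := key.trans hsplit2
    set J := ∫ t in Ioc 0 x, a t * (Wf a t) ^ (n+1) with hJ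
    set Z := Wf a x with hZ
    have hn1 : ((n:ℂ)+1) ≠ 0 := Nat.cast_add_one_ne_zero n
    have hn2 : ((n:ℂ)+2) ≠ 0 := by
      intro hc
      have h2 : ((n:ℂ) + 2) = ((n+2 : ℕ) : ℂ) := by push_cast; ring
      rw [h2] at hc
      exact Nat.cast_ne_zero.mpr (by omega) hc
    have hcast : ((n+1 : ℕ) : ℂ) + 1 = (n:ℂ) + 2 := by push_cast; ring
    rw [hcast]
    field_simp at hEq ⊢
    linear_combination hEq
lemma exp_rule (hm : Measurable a) (hb : ∀ t, ‖a t‖ ≤ M) {x : ℝ} (hx : 0 ≤ x) :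
    ∫ t in Ioc 0 x, a t * Complex.exp (Wf a t) = Complex.exp (Wf a x) - 1 := by
  have hM := M_nonneg hb
  set F : ℕ → ℝ → ℂ := fun n t => a t * ((Wf a t) ^ n / (n.factorial : ℂ)) with hF
  have hFint : ∀ n, Integrable (F n) (volume.restrict (Ioc 0 x)) := fun n =>
    aW_int hm hb hx (fun z => z ^ n / (n.factorial : ℂ)) ((continuous_pow n).div_const _)
  have hFbd : ∀ n, ∀ t ∈ Ioc (0:ℝ) x, ‖F n t‖ ≤ M * ((M*x) ^ n / (n.factorial : ℝ)) := by
    intro n t ht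
    have h1 : ‖Wf a t‖ ≤ M * x := le_trans (Wf_norm_le hb (le_of_lt ht.1))
      (mul_le_mul_of_nonneg_left ht.2 hM)
    have heq : ‖F n t‖ = ‖a t‖ * (‖Wf a t‖ ^ n / (n.factorial : ℝ)) := by
      rw [hF]; simp [norm_mul, norm_div, norm_pow]
    rw [heq]
    have h4 : (0:ℝ) < n.factorial := by exact_mod_cast n.factorial_pos
    gcongr
    all_goals first | exact hb t | exact h1
  have hhs : ∀ t : ℝ, HasSum (fun n => F n t) (a t * Complex.exp (Wf a t)) := by
    intro t
    have h := NormedSpace.expSeries_div_hasSum_exp (Wf a t)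
    rw [← Complex.exp_eq_exp_ℂ] at h
    exact h.mul_left (a t)
  have hx_meas : volume (Ioc (0:ℝ) x) = ENNReal.ofReal x := by
    rw [Real.volume_Ioc, sub_zero]
  have hsum_int : Summable (fun n => ∫ t in Ioc 0 x, ‖F n t‖) := by
    refine Summable.of_nonneg_of_le (fun n => integral_nonneg (fun t => norm_nonneg _))
      (fun n => ?_) (((Real.summable_pow_div_factorial (M*x)).mul_left M).mul_right x)
    have hle : ∫ t in Ioc 0 x, ‖F n t‖ ≤ ∫ _t in Ioc (0:ℝ) x, M * ((M*x) ^ n / (n.factorial : ℝ)) := by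
      refine setIntegral_mono_on (hFint n).norm (integrable_const _) measurableSet_Ioc ?_
      exact fun t ht => hFbd n t ht
    refine le_trans hle ?_
    rw [setIntegral_const, measureReal_def, hx_meas, ENNReal.toReal_ofReal hx, smul_eq_mul]
    exact le_of_eq (by ring)
  have hswap := MeasureTheory.integral_tsum_of_summable_integral_norm hFint hsum_int
  have h2 : ∀ n : ℕ, ∫ t in Ioc 0 x, F n t = ((Wf a x) ^ (n+1) / ((n:ℂ)+1)) / (n.factorial : ℂ) := by
    intro n
    have : ∀ t : ℝ, F n t = (a t * (Wf a t) ^ n) / (n.factorial : ℂ) := by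
      intro t; rw [hF]; ring
    simp_rw [this]
    rw [integral_div, pow_rule hm hb n x hx]
  have hhs2 : HasSum (fun n : ℕ => (Wf a x) ^ (n+1) / (((n+1).factorial : ℕ) : ℂ))
      (Complex.exp (Wf a x) - 1) := by
    have h := NormedSpace.expSeries_div_hasSum_exp (Wf a x)
    rw [← Complex.exp_eq_exp_ℂ] at h
    have h3 := (hasSum_nat_add_iff' (f := fun n : ℕ => (Wf a x) ^ n / (n.factorial : ℂ)) 1).mpr h
    simpa using h3
  have hL : ∫ t in Ioc 0 x, a t * Complex.exp (Wf a t) = ∑' n, ∫ t in Ioc 0 x, F n t := by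
    rw [hswap]
    refine setIntegral_congr_fun measurableSet_Ioc (fun t _ => ?_)
    exact ((hhs t).tsum_eq).symm
  rw [hL, ← hhs2.tsum_eq]
  congr 1; funext n
  rw [h2 n, div_div]
  congr 1
  rw [Nat.factorial_succ]
  push_cast
  ring
lemma exp_rule_sub (hm : Measurable a) (hb : ∀ t, ‖a t‖ ≤ M) {s x : ℝ} (hs : 0 ≤ s) (hsx : s ≤ x) :
    ∫ t in Ioc s x, a t * Complex.exp (Wf a t) = Complex.exp (Wf a x) - Complex.exp (Wf a s) := by
  have hx : 0 ≤ x := le_trans hs hsx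
  have hadd := setIntegral_union (f := fun t => a t * Complex.exp (Wf a t)) (μ := volume)
    (Ioc_disjoint_Ioc_of_le (a := (0:ℝ)) (b := s) (c := s) (d := x) le_rfl) measurableSet_Ioc
    (aW_int hm hb hs _ Complex.continuous_exp)
    ((aW_int hm hb hx _ Complex.continuous_exp).mono_set (Ioc_subset_Ioc hs le_rfl))
  rw [Ioc_union_Ioc_eq_Ioc hs hsx, exp_rule hm hb hx, exp_rule hm hb hs] at hadd
  have := eq_sub_of_add_eq' hadd.symm
  rw [this]; ring

lemma norm_exp_le_of_mem {x t : ℝ} (hb : ∀ t, ‖a t‖ ≤ M) (ht : t ∈ Icc 0 x) (z : ℂ)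
    (hz : z = Wf a t ∨ z = -Wf a t) : ‖Complex.exp z‖ ≤ Real.exp (M * x) := by
  have hM := M_nonneg hb
  have h1 : ‖z‖ ≤ M * x := by
    have := Wf_norm_le hb ht.1
    have h2 : M * t ≤ M * x := mul_le_mul_of_nonneg_left ht.2 hM
    rcases hz with h | h <;> rw [h] <;> simpa using le_trans this h2
  calc ‖Complex.exp z‖ = Real.exp z.re := Complex.norm_exp z
    _ ≤ Real.exp ‖z‖ := Real.exp_le_exp.2 (Complex.re_le_norm z)
    _ ≤ Real.exp (M * x) := Real.exp_le_exp.2 h1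

/-- Duhamel formula: the explicit solution satisfies the integral equation. -/
lemma duhamel (hm : Measurable a) (hb : ∀ t, ‖a t‖ ≤ M) {b : ℝ → ℂ} (hbm : Measurable b)
    {T : ℝ} (hT : 0 ≤ T) (hbi : IntegrableOn b (Ioc 0 T)) (C : ℂ) {x : ℝ} (hx : x ∈ Icc 0 T) :
    Complex.exp (Wf a x) * (C + ∫ t in Ioc 0 x, Complex.exp (-Wf a t) * b t)
      = C + ∫ t in Ioc 0 x, (a t * (Complex.exp (Wf a t)
          * (C + ∫ s in Ioc 0 t, Complex.exp (-Wf a s) * b s)) + b t) := by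
  have hM := M_nonneg hb
  have hWcont := Wf_cont hm hb
  have hbix : IntegrableOn b (Ioc 0 x) := hbi.mono_set (Ioc_subset_Ioc le_rfl hx.2)
  have hEb_int : ∀ y : ℝ, 0 ≤ y → y ≤ T →
      IntegrableOn (fun t => Complex.exp (-Wf a t) * b t) (Ioc 0 y) := by
    intro y hy hyT
    refine Integrable.bdd_mul (c := Real.exp (M * T))
      (hbi.mono_set (Ioc_subset_Ioc le_rfl hyT))
      ((Complex.continuous_exp.comp (hWcont.neg)).aestronglyMeasurable).restrict ?_
    filter_upwards [ae_restrict_mem measurableSet_Ioc] with t ht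
    exact norm_exp_le_of_mem hb ⟨le_of_lt ht.1, le_trans ht.2 hyT⟩ _ (Or.inr rfl)
  -- continuity of the inner primitive
  have hprim_cont : ContinuousOn (fun y => ∫ t in Ioc 0 y, Complex.exp (-Wf a t) * b t)
      (Icc 0 T) := by
    apply intervalIntegral.continuousOn_primitive
    rw [show Icc (0:ℝ) T = Ioc 0 T ∪ {0} by
      rw [union_singleton, Ioc_insert_left hT]]
    exact (hEb_int T hT le_rfl).union (integrableOn_singleton (hx := by simp))
  -- the function h
  set h : ℝ → ℂ := fun y => Complex.exp (Wf a y)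
    * (C + ∫ s in Ioc 0 y, Complex.exp (-Wf a s) * b s) with hh
  have hh_cont : ContinuousOn h (Icc 0 T) :=
    ((Complex.continuous_exp.comp hWcont).continuousOn).mul
      (continuousOn_const.add hprim_cont)
  -- integrability of a * h
  obtain ⟨D, hD⟩ := (isCompact_Icc (a := (0:ℝ)) (b := T)).exists_bound_of_continuousOn hh_cont
  have hah_int : ∀ y : ℝ, 0 ≤ y → y ≤ T → IntegrableOn (fun t => a t * h t) (Ioc 0 y) := by
    intro y hy hyT
    refine integrableOn_of_bdd (C := M * D) ?_ measure_Ioc_lt_top ?_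
    · exact (hm.aestronglyMeasurable.restrict).mul
        ((hh_cont.mono (Ioc_subset_Icc_self.trans (Icc_subset_Icc le_rfl hyT))).aestronglyMeasurable
          measurableSet_Ioc)
    · filter_upwards [ae_restrict_mem measurableSet_Ioc] with t ht
      rw [norm_mul]
      exact mul_le_mul (hb t) (hD t ⟨le_of_lt ht.1, le_trans ht.2 hyT⟩)
        (norm_nonneg _) hM
  -- Split the RHS integral
  rw [integral_add (hah_int x hx.1 hx.2) hbix]
  -- compute ∫ a h
  have hsplit : ∫ t in Ioc 0 x, a t * h t
      = C * (Complex.exp (Wf a x) - 1)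
        + ∫ t in Ioc 0 x, (a t * Complex.exp (Wf a t)) * ∫ s in Ioc 0 t, Complex.exp (-Wf a s) * b s := by
    have : ∀ t : ℝ, a t * h t = C * (a t * Complex.exp (Wf a t))
        + (a t * Complex.exp (Wf a t)) * ∫ s in Ioc 0 t, Complex.exp (-Wf a s) * b s := by
      intro t; rw [hh]; ring
    simp_rw [this]
    rw [integral_add ((aW_int hm hb hx.1 _ Complex.continuous_exp).const_mul C) ?hint2,
      MeasureTheory.integral_const_mul, exp_rule hm hb hx.1]
    case hint2 =>
      have heq : ∀ t : ℝ, (a t * Complex.exp (Wf a t)) * (∫ s in Ioc 0 t, Complex.exp (-Wf a s) * b s)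
          = a t * (h t - C * Complex.exp (Wf a t)) := by intro t; rw [hh]; ring
      simp_rw [heq]
      have h2 := (hah_int x hx.1 hx.2).sub
        (((aW_int hm hb hx.1 _ Complex.continuous_exp).const_mul C))
      refine h2.congr (Filter.Eventually.of_forall (fun t => by simp only [Pi.sub_apply]; ring))
  rw [hsplit]
  -- Fubini on the double integral
  have hfub := fubini_triangle (g := fun s => Complex.exp (-Wf a s) * b s)
    (h := fun t => a t * Complex.exp (Wf a t)) (x := x) (C := M * Real.exp (M * x)) hx.1
    ((Complex.measurable_exp.comp (hWcont.measurable.neg)).mul hbm)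
    (hm.mul (Complex.measurable_exp.comp hWcont.measurable))
    (hEb_int x hx.1 hx.2)
    (fun t ht => by
      rw [norm_mul]
      exact mul_le_mul (hb t) (norm_exp_le_of_mem hb ⟨le_of_lt ht.1, ht.2⟩ _ (Or.inl rfl))
        (norm_nonneg _) hM)
  rw [hfub]
  have hinner : ∀ s ∈ Ioc (0:ℝ) x,
      (Complex.exp (-Wf a s) * b s) * (∫ t in Ioc s x, a t * Complex.exp (Wf a t))
      = Complex.exp (Wf a x) * (Complex.exp (-Wf a s) * b s) - b s := by
    intro s hs
    rw [exp_rule_sub hm hb (le_of_lt hs.1) hs.2]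
    have : Complex.exp (-Wf a s) * Complex.exp (Wf a s) = 1 := by
      rw [← Complex.exp_add]; simp
    calc (Complex.exp (-Wf a s) * b s) * (Complex.exp (Wf a x) - Complex.exp (Wf a s))
        = Complex.exp (Wf a x) * (Complex.exp (-Wf a s) * b s)
          - (Complex.exp (-Wf a s) * Complex.exp (Wf a s)) * b s := by ring
      _ = Complex.exp (Wf a x) * (Complex.exp (-Wf a s) * b s) - b s := by rw [this, one_mul]
  rw [setIntegral_congr_fun measurableSet_Ioc hinner]
  rw [integral_sub ((hEb_int x hx.1 hx.2).const_mul _) hbix, MeasureTheory.integral_const_mul]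
  ring
/-- Grönwall-type uniqueness. -/
lemma gronwall_zero (hb : ∀ t, ‖a t‖ ≤ M) {d : ℝ → ℂ} {T : ℝ} (hT : 0 ≤ T)
    (hdc : ContinuousOn d (Icc 0 T))
    (heq : ∀ x ∈ Icc (0:ℝ) T, d x = ∫ t in Ioc 0 x, a t * d t) :
    ∀ x ∈ Icc (0:ℝ) T, d x = 0 := by
  have hM := M_nonneg hb
  obtain ⟨C, hC⟩ := (isCompact_Icc (a := (0:ℝ)) (b := T)).exists_bound_of_continuousOn hdc
  have hC0 : 0 ≤ C := le_trans (norm_nonneg _) (hC 0 ⟨le_rfl, hT⟩)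
  have key : ∀ n : ℕ, ∀ x ∈ Icc (0:ℝ) T, ‖d x‖ ≤ C * (M ^ n * x ^ n / n.factorial) := by
    intro n
    induction n with
    | zero => intro x hx; simpa using hC x hx
    | succ n IH =>
      intro x hx
      rw [heq x hx]
      have hbound : ∀ᵐ t ∂(volume.restrict (Ioc 0 x)),
          ‖a t * d t‖ ≤ M * (C * (M ^ n * t ^ n / n.factorial)) := by
        filter_upwards [ae_restrict_mem measurableSet_Ioc] with t ht
        rw [norm_mul]
        have h1 : t ∈ Icc (0:ℝ) T := ⟨le_of_lt ht.1, le_trans ht.2 hx.2⟩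
        have ht0 : (0:ℝ) ≤ t := le_of_lt ht.1
        have h2 : (0:ℝ) ≤ C * (M ^ n * t ^ n / n.factorial) :=
          mul_nonneg hC0 (div_nonneg (mul_nonneg (pow_nonneg hM n) (pow_nonneg ht0 n))
            (by positivity))
        exact mul_le_mul (hb t) (IH t h1) (norm_nonneg _) hM
      have hgint : IntegrableOn (fun t => M * (C * (M ^ n * t ^ n / n.factorial)))
          (Ioc 0 x) := (Continuous.integrableOn_Ioc (by continuity))
      have h3 := norm_integral_le_of_norm_le hgint hbound
      refine le_trans h3 ?_
      have h4 : ∫ t in Ioc 0 x, M * (C * (M ^ n * t ^ n / n.factorial))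
          = (M * (C * (M ^ n / n.factorial))) * ∫ t in Ioc 0 x, t ^ n := by
        rw [← integral_const_mul]
        refine setIntegral_congr_fun measurableSet_Ioc (fun t _ => by ring)
      rw [h4]
      have h5 : ∫ t in Ioc 0 x, t ^ n = x ^ (n+1) / (n+1) := by
        rw [← intervalIntegral.integral_of_le hx.1, integral_pow]
        simp
      rw [h5, Nat.factorial_succ]
      apply le_of_eq
      have hfac : (0:ℝ) < (n.factorial:ℝ) := by exact_mod_cast n.factorial_pos
      have hn1 : (0:ℝ) < (n:ℝ) + 1 := by positivity
      push_cast
      field_simp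
      ring
  intro x hx
  have hlim : Filter.Tendsto (fun n : ℕ => C * ((M * x) ^ n / n.factorial))
      Filter.atTop (nhds 0) := by
    have := FloorSemiring.tendsto_pow_div_factorial_atTop (K := ℝ) (M * x)
    simpa using this.const_mul C
  have hle : ∀ n : ℕ, ‖d x‖ ≤ C * ((M * x) ^ n / n.factorial) := by
    intro n
    rw [mul_pow]
    exact key n x hx
  have : ‖d x‖ ≤ 0 := ge_of_tendsto' hlim hle
  simpa using le_antisymm this (norm_nonneg _)
lemma aφ_int (hm : Measurable a) (hb : ∀ t, ‖a t‖ ≤ M) {φ : ℝ → ℂ} {T : ℝ}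
    (hφ : ContinuousOn φ (Icc 0 T)) {x : ℝ} (hx : x ∈ Icc (0:ℝ) T) :
    IntegrableOn (fun t => a t * φ t) (Ioc 0 x) := by
  obtain ⟨D, hD⟩ := (isCompact_Icc (a := (0:ℝ)) (b := T)).exists_bound_of_continuousOn hφ
  have hsub : Ioc (0:ℝ) x ⊆ Icc 0 T :=
    Ioc_subset_Icc_self.trans (Icc_subset_Icc le_rfl hx.2)
  refine integrableOn_of_bdd (C := M * D) ?_ measure_Ioc_lt_top ?_
  · exact hm.aestronglyMeasurable.restrict.mul
      ((hφ.mono hsub).aestronglyMeasurable measurableSet_Ioc)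
  · filter_upwards [ae_restrict_mem measurableSet_Ioc] with t ht
    rw [norm_mul]
    exact mul_le_mul (hb t) (hD t (hsub ht)) (norm_nonneg _) (M_nonneg hb)

lemma Eb_int (hm : Measurable a) (hb : ∀ t, ‖a t‖ ≤ M) {b : ℝ → ℂ} {T : ℝ} (hT : 0 ≤ T)
    (hbi : IntegrableOn b (Ioc 0 T)) :
    IntegrableOn (fun t => Complex.exp (-Wf a t) * b t) (Icc 0 T) := by
  have hbIcc : IntegrableOn b (Icc 0 T) := by
    rw [IntegrableOn, ← Measure.restrict_congr_set Ioc_ae_eq_Icc]; exact hbi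
  refine Integrable.bdd_mul (c := Real.exp (M * T)) hbIcc
    ((Complex.continuous_exp.comp ((Wf_cont hm hb).neg)).aestronglyMeasurable).restrict ?_
  filter_upwards [ae_restrict_mem measurableSet_Icc] with t ht
  exact norm_exp_le_of_mem hb ht _ (Or.inr rfl)

lemma sol_cont (hm : Measurable a) (hb : ∀ t, ‖a t‖ ≤ M) {b : ℝ → ℂ} {T : ℝ} (hT : 0 ≤ T)
    (hbi : IntegrableOn b (Ioc 0 T)) (C : ℂ) :
    ContinuousOn (fun y => Complex.exp (Wf a y)
      * (C + ∫ s in Ioc 0 y, Complex.exp (-Wf a s) * b s)) (Icc 0 T) :=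
  ((Complex.continuous_exp.comp (Wf_cont hm hb)).continuousOn).mul
    (continuousOn_const.add (intervalIntegral.continuousOn_primitive (Eb_int hm hb hT hbi)))

end EigenAux

open Set in
open EigenAux in
/-- Theorem 3.1 (characterization of eigenvalues): `λ` is an eigenvalue of
`A_{ρ,k} f = if' + Vf + f(2π)k`, `f(0) = ρ f(2π)`, if and only if the transcendental
eigenvalue equation (3.4) holds. -/
theorem eigenvalue_iff_transcendental_equation
    (V k : ℝ → ℂ)
    (hV : MeasureTheory.MemLp V ⊤ (MeasureTheory.volume.restrict (Set.Ioo 0 (2 * Real.pi))))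
    (hk : MeasureTheory.MemLp k 2 (MeasureTheory.volume.restrict (Set.Ioo 0 (2 * Real.pi))))
    (ρ : ℂ) (lam : ℂ) :
    (∃ f f' : ℝ → ℂ, IsACWithDeriv f f' ∧
        (∃ x ∈ Set.Icc (0:ℝ) (2 * Real.pi), f x ≠ 0) ∧
        f 0 = ρ * f (2 * Real.pi) ∧
        ∀ᵐ x ∂(MeasureTheory.volume.restrict (Set.Ioo 0 (2 * Real.pi))),
          Complex.I * f' x + V x * f x + f (2 * Real.pi) * k x = lam * f x)
      ↔
    Complex.exp (Complex.I * ∫ t in (0:ℝ)..(2 * Real.pi), (V t - lam)) *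
        (Complex.I * (∫ t in (0:ℝ)..(2 * Real.pi),
            Complex.exp (-(Complex.I * ∫ s in (0:ℝ)..t, (V s - lam))) * k t) + ρ) = 1 := by
  have hπ : (0:ℝ) < 2 * Real.pi := by positivity
  have hT : (0:ℝ) ≤ 2 * Real.pi := le_of_lt hπ
  set μIoo := MeasureTheory.volume.restrict (Set.Ioo 0 (2 * Real.pi)) with hμIoo
  -- bounded measurable representative of V
  set Mv : ℝ := (eLpNorm V ⊤ μIoo).toReal with hMv
  have hVtop : eLpNorm V ⊤ μIoo ≠ ⊤ := hV.2.ne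
  have hVbd : ∀ᵐ x ∂μIoo, ‖V x‖ ≤ Mv := by
    have h1 := ae_le_eLpNormEssSup (f := V) (μ := μIoo)
    rw [eLpNorm_exponent_top] at hVtop
    filter_upwards [h1] with x hx
    have := ENNReal.toReal_mono hVtop hx
    simpa [hMv, eLpNorm_exponent_top] using this
  have hMv0 : 0 ≤ Mv := ENNReal.toReal_nonneg
  set Vmk := hV.1.mk V with hVmkdef
  have hVmk_meas : StronglyMeasurable Vmk := hV.1.stronglyMeasurable_mk
  set V₂ : ℝ → ℂ := fun x =>
    if x ∈ Set.Ioo (0:ℝ) (2 * Real.pi) ∧ ‖Vmk x‖ ≤ Mv then Vmk x else 0 with hV₂def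
  have hV₂m : Measurable V₂ := by
    refine Measurable.ite ?_ hVmk_meas.measurable measurable_const
    exact (measurableSet_Ioo).inter (measurableSet_le hVmk_meas.measurable.norm measurable_const)
  have hV₂bd : ∀ x, ‖V₂ x‖ ≤ Mv := by
    intro x
    simp only [hV₂def]
    split_ifs with hx
    · exact hx.2
    · simpa using hMv0
  have hV₂ae : V =ᵐ[μIoo] V₂ := by
    have h1 := hV.1.ae_eq_mk
    filter_upwards [h1, hVbd, MeasureTheory.ae_restrict_mem measurableSet_Ioo]
      with x h1x h2x h3x
    simp only [hV₂def]
    have hle : ‖Vmk x‖ ≤ Mv := by rw [hVmkdef, ← h1x]; exact h2x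
    rw [if_pos ⟨h3x, hle⟩]
    exact h1x
  -- integrable measurable representative of k
  haveI : MeasureTheory.IsFiniteMeasure μIoo :=
    ⟨by rw [MeasureTheory.Measure.restrict_apply_univ]; exact measure_Ioo_lt_top⟩
  have hk_int : MeasureTheory.IntegrableOn k (Set.Ioo 0 (2 * Real.pi)) := hk.integrable one_le_two
  set kmk := hk.1.mk k with hkmkdef
  set k₂ : ℝ → ℂ := (Set.Ioo (0:ℝ) (2 * Real.pi)).indicator kmk with hk₂def
  have hk₂m : Measurable k₂ :=
    (hk.1.stronglyMeasurable_mk.measurable).indicator measurableSet_Ioo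
  have hk₂ae : k =ᵐ[μIoo] k₂ := by
    filter_upwards [hk.1.ae_eq_mk, MeasureTheory.ae_restrict_mem measurableSet_Ioo] with x h1 h2
    rw [hk₂def, Set.indicator_of_mem h2, hkmkdef, ← h1]
  have hk₂int : MeasureTheory.Integrable k₂ MeasureTheory.volume := by
    rw [hk₂def]
    exact MeasureTheory.IntegrableOn.integrable_indicator
      (hk_int.congr (hk.1.ae_eq_mk.mono fun x hx => hx)) measurableSet_Ioo
  -- the coefficient a
  set a : ℝ → ℂ := fun t => Complex.I * (V₂ t - lam) with hadef
  set Ma : ℝ := Mv + ‖lam‖ with hMadef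
  have ham : Measurable a := (hV₂m.sub measurable_const).const_mul Complex.I
  have hab : ∀ t, ‖a t‖ ≤ Ma := by
    intro t
    rw [hadef]
    calc ‖Complex.I * (V₂ t - lam)‖ = ‖V₂ t - lam‖ := by simp
      _ ≤ ‖V₂ t‖ + ‖lam‖ := norm_sub_le _ _
      _ ≤ Mv + ‖lam‖ := add_le_add_left (hV₂bd t) _
  -- transfer a.e. equalities from Ioo to Ioc pieces
  have hae_to_Ioc : ∀ (g₁ g₂ : ℝ → ℂ), (g₁ =ᵐ[μIoo] g₂) → ∀ x ∈ Set.Icc (0:ℝ) (2 * Real.pi),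
      g₁ =ᵐ[MeasureTheory.volume.restrict (Set.Ioc 0 x)] g₂ := by
    intro g₁ g₂ hg x hx
    rw [hμIoo] at hg
    have h1 : ∀ᵐ t ∂MeasureTheory.volume, t ∈ Set.Ioo (0:ℝ) (2 * Real.pi) → g₁ t = g₂ t :=
      (MeasureTheory.ae_restrict_iff' measurableSet_Ioo).1 hg
    have h2 : ∀ᵐ t : ℝ ∂MeasureTheory.volume, t ≠ 2 * Real.pi := by
      rw [MeasureTheory.ae_iff]
      have : {t : ℝ | ¬ t ≠ 2 * Real.pi} = {2 * Real.pi} := by ext t; simp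
      rw [this]
      exact measure_singleton _
    refine (MeasureTheory.ae_restrict_iff' measurableSet_Ioc).2 ?_
    filter_upwards [h1, h2] with t h1t h2t h3t
    exact h1t ⟨h3t.1, lt_of_le_of_ne (le_trans h3t.2 hx.2) h2t⟩
  -- the fundamental bridge: interval integrals of V match Wf a
  have hW_eq : ∀ x ∈ Set.Icc (0:ℝ) (2 * Real.pi),
      Complex.I * (∫ t in (0:ℝ)..x, (V t - lam)) = Wf a x := by
    intro x hx
    have h1 : Wf a x = ∫ t in Set.Ioc 0 x, a t := Wf_eq_Ioc hx.1
    rw [h1, intervalIntegral.integral_of_le hx.1, ← MeasureTheory.integral_const_mul]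
    refine MeasureTheory.integral_congr_ae ?_
    filter_upwards [hae_to_Ioc V V₂ hV₂ae x hx] with t ht
    rw [hadef, ht]
  -- bridge for the full eigenvalue equation LHS
  set K : ℂ := ∫ t in Set.Ioc (0:ℝ) (2 * Real.pi), Complex.exp (-Wf a t) * k₂ t with hKdef
  have hLHS : Complex.exp (Complex.I * ∫ t in (0:ℝ)..(2 * Real.pi), (V t - lam)) *
        (Complex.I * (∫ t in (0:ℝ)..(2 * Real.pi),
            Complex.exp (-(Complex.I * ∫ s in (0:ℝ)..t, (V s - lam))) * k t) + ρ)
      = Complex.exp (Wf a (2 * Real.pi)) * (Complex.I * K + ρ) := by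
    rw [hW_eq (2 * Real.pi) ⟨hT, le_rfl⟩]
    congr 3
    rw [intervalIntegral.integral_of_le hT, hKdef]
    refine MeasureTheory.integral_congr_ae ?_
    filter_upwards [hae_to_Ioc k k₂ hk₂ae (2 * Real.pi) ⟨hT, le_rfl⟩,
      MeasureTheory.ae_restrict_mem measurableSet_Ioc] with t ht hmem
    rw [ht, hW_eq t ⟨le_of_lt hmem.1, hmem.2⟩]
  constructor
  · rintro ⟨f, f', ⟨hf'int, hfAC⟩, ⟨x₀, hx₀, hfx₀⟩, hbc, hode⟩
    set c := f (2 * Real.pi) with hcdef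
    set b : ℝ → ℂ := fun t => Complex.I * c * k₂ t with hbdef
    have hbm : Measurable b := hk₂m.const_mul _
    have hbi : MeasureTheory.IntegrableOn b (Set.Ioc 0 (2 * Real.pi)) :=
      (hk₂int.integrableOn).const_mul _
    have hode2 : ∀ᵐ t ∂μIoo, f' t = a t * f t + b t := by
      filter_upwards [hode, hV₂ae, hk₂ae] with t h1 h2 h3
      simp only [hadef, hbdef]
      rw [← h2, ← h3]
      linear_combination (-Complex.I) * h1 + f' t * Complex.I_mul_I
    have hf'Icc : MeasureTheory.IntegrableOn f' (Set.Icc 0 (2 * Real.pi)) := by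
      rw [MeasureTheory.IntegrableOn,
        ← MeasureTheory.Measure.restrict_congr_set MeasureTheory.Ioc_ae_eq_Icc]
      exact hf'int
    have hf_cont : ContinuousOn f (Set.Icc 0 (2 * Real.pi)) := by
      have hp := intervalIntegral.continuousOn_primitive (f := f') (a := 0) (b := 2*Real.pi)
        (μ := MeasureTheory.volume) hf'Icc
      refine ContinuousOn.congr (g := f)
        (f := fun x => f 0 + ∫ t in Set.Ioc 0 x, f' t)
        ((continuousOn_const (c := f 0)).add hp) ?_
      intro x hx
      rw [hfAC x hx, intervalIntegral.integral_of_le hx.1]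
    set h : ℝ → ℂ := fun y => Complex.exp (Wf a y)
      * (f 0 + ∫ s in Set.Ioc 0 y, Complex.exp (-Wf a s) * b s) with hhdef
    have hh_cont : ContinuousOn h (Set.Icc 0 (2 * Real.pi)) := by
      rw [hhdef]; exact sol_cont ham hab hT hbi (f 0)
    have hf_eq : ∀ x ∈ Set.Icc (0:ℝ) (2 * Real.pi),
        f x = f 0 + ∫ t in Set.Ioc 0 x, (a t * f t + b t) := by
      intro x hx
      rw [hfAC x hx, intervalIntegral.integral_of_le hx.1]
      congr 1
      exact MeasureTheory.integral_congr_ae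
        (hae_to_Ioc f' (fun t => a t * f t + b t) hode2 x hx)
    have hh_eq : ∀ x ∈ Set.Icc (0:ℝ) (2 * Real.pi),
        h x = f 0 + ∫ t in Set.Ioc 0 x, (a t * h t + b t) := by
      intro x hx
      simp only [hhdef]
      exact duhamel ham hab hbm hT hbi (f 0) hx
    have hd_eq : ∀ x ∈ Set.Icc (0:ℝ) (2 * Real.pi),
        (fun y => f y - h y) x = ∫ t in Set.Ioc 0 x, a t * ((fun y => f y - h y) t) := by
      intro x hx
      have hint1 : MeasureTheory.IntegrableOn (fun t => a t * f t + b t) (Set.Ioc 0 x) :=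
        (aφ_int ham hab hf_cont hx).add (hbi.mono_set (Set.Ioc_subset_Ioc le_rfl hx.2))
      have hint2 : MeasureTheory.IntegrableOn (fun t => a t * h t + b t) (Set.Ioc 0 x) :=
        (aφ_int ham hab hh_cont hx).add (hbi.mono_set (Set.Ioc_subset_Ioc le_rfl hx.2))
      simp only
      calc f x - h x
          = (∫ t in Set.Ioc 0 x, (a t * f t + b t))
            - (∫ t in Set.Ioc 0 x, (a t * h t + b t)) := by
            rw [hf_eq x hx, hh_eq x hx]; ring
        _ = ∫ t in Set.Ioc 0 x, ((a t * f t + b t) - (a t * h t + b t)) :=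
            (MeasureTheory.integral_sub hint1 hint2).symm
        _ = ∫ t in Set.Ioc 0 x, a t * (f t - h t) :=
            MeasureTheory.setIntegral_congr_fun measurableSet_Ioc (fun t _ => by ring)
    have hfh : ∀ x ∈ Set.Icc (0:ℝ) (2 * Real.pi), f x = h x := by
      intro x hx
      have := gronwall_zero hab hT (hf_cont.sub hh_cont) hd_eq x hx
      exact sub_eq_zero.1 this
    by_cases hc : c = 0
    · exfalso
      apply hfx₀
      have hb0 : ∀ t, b t = 0 := by intro t; rw [hbdef]; simp [hc]
      have hf0 : f 0 = 0 := by rw [hbc, hc, mul_zero]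
      rw [hfh x₀ hx₀, hhdef]
      simp only
      rw [hf0]
      have : ∀ s, Complex.exp (-Wf a s) * b s = 0 := fun s => by rw [hb0 s, mul_zero]
      simp [this]
    · have h2 : ∫ s in Set.Ioc (0:ℝ) (2 * Real.pi), Complex.exp (-Wf a s) * b s
          = Complex.I * c * K := by
        rw [hKdef, ← MeasureTheory.integral_const_mul]
        refine MeasureTheory.setIntegral_congr_fun measurableSet_Ioc (fun s _ => ?_)
        simp only [hbdef]; ring
      have hc2 : c = Complex.exp (Wf a (2 * Real.pi)) * (ρ * c + Complex.I * c * K) := by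
        have h1 := hfh (2 * Real.pi) ⟨hT, le_rfl⟩
        rw [hhdef] at h1
        simp only at h1
        rw [h2, hbc] at h1
        exact h1
      rw [hLHS]
      exact mul_left_cancel₀ hc (by rw [mul_one]; linear_combination (-1 : ℂ) * hc2)
  · intro heqn
    set b : ℝ → ℂ := fun t => Complex.I * k₂ t with hbdef
    have hbm : Measurable b := hk₂m.const_mul _
    have hbi : MeasureTheory.IntegrableOn b (Set.Ioc 0 (2 * Real.pi)) :=
      (hk₂int.integrableOn).const_mul _
    set f : ℝ → ℂ := fun y => Complex.exp (Wf a y)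
      * (ρ + ∫ s in Set.Ioc 0 y, Complex.exp (-Wf a s) * b s) with hfdef
    set f' : ℝ → ℂ := fun t => a t * f t + b t with hf'def
    have hf_cont : ContinuousOn f (Set.Icc 0 (2 * Real.pi)) := by
      rw [hfdef]; exact sol_cont ham hab hT hbi ρ
    have hf0 : f 0 = ρ := by
      rw [hfdef]; simp only
      rw [show Wf a 0 = 0 from intervalIntegral.integral_same]
      simp
    have hf2π : f (2 * Real.pi) = 1 := by
      rw [hfdef]; simp only
      have h2 : ∫ s in Set.Ioc (0:ℝ) (2 * Real.pi), Complex.exp (-Wf a s) * b s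
          = Complex.I * K := by
        rw [hKdef, ← MeasureTheory.integral_const_mul]
        refine MeasureTheory.setIntegral_congr_fun measurableSet_Ioc (fun s _ => ?_)
        simp only [hbdef]; ring
      rw [h2, hLHS] at *
      linear_combination heqn
    refine ⟨f, f', ⟨?_, ?_⟩, ⟨2 * Real.pi, ⟨hT, le_rfl⟩, ?_⟩, ?_, ?_⟩
    · simp only [hf'def]
      exact (aφ_int ham hab hf_cont ⟨hT, le_rfl⟩).add hbi
    · intro x hx
      rw [intervalIntegral.integral_of_le hx.1, hf0]
      have hd := duhamel ham hab hbm hT hbi ρ hx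
      simp only [hfdef, hf'def]
      exact hd
    · rw [hf2π]; exact one_ne_zero
    · rw [hf0, hf2π, mul_one]
    · filter_upwards [hV₂ae, hk₂ae] with t h2 h3
      rw [hf2π, one_mul]
      simp only [hf'def, hbdef, hadef]
      rw [h2, h3]
      linear_combination ((V₂ t - lam) * f t + k₂ t) * Complex.I_mul_I

end EigenAuxSection
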